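/- For every n ≥ 1, the function R_n attains its maximum over the cube [0, 1/2]^n at a point p* whose coordinates take at most one value in the open interval (0, 1/2); that is, there exist a maximizer p* of R_n on [0,1/2]^n and a number u ∈ (0,1/2) such that every coordinate of p* lies in the set {0, u, 1/2}. -/

import Mathlib

/-- `F(m) = C(m, ⌊m/2⌋) · 2^{−m}`. -/
noncomputable def F' (m : ℕ) : ℝ := (m.choose (m / 2) : ℝ) / 2 ^ m

/-- `E_n(p) = Σ_{A ⊆ {1,…,n}} F(|A|) ∏_{i∈A} p_i ∏_{i∉A} (1−p_i)`, the expectation of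
`F` at a sum of independent Bernoulli(`p_i`) variables. -/
noncomputable def En {n : ℕ} (p : Fin n → ℝ) : ℝ :=
  ∑ A ∈ (Finset.univ : Finset (Fin n)).powerset,
    F' A.card * ((∏ i ∈ A, p i) * ∏ i ∈ Aᶜ, (1 - p i))

/-- `R_n(p) = √(p_1 + ⋯ + p_n) · E_n(p)`. -/
noncomputable def Rn {n : ℕ} (p : Fin n → ℝ) : ℝ := Real.sqrt (∑ i, p i) * En p

/-- For every `n ≥ 1`, `R_n` attains its maximum over `[0,1/2]^n` at a point `p*`
whose coordinates take at most one value in the open interval `(0,1/2)`: there are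
a maximizer `p*` and `u ∈ (0,1/2)` such that every coordinate of `p*` lies in
`{0, u, 1/2}`. -/
lemma En_update {n : ℕ} (p : Fin n → ℝ) (i : Fin n) (x : ℝ) :
    En (Function.update p i x) =
      (1 - x) * En (Function.update p i 0) + x * En (Function.update p i 1) := by
  unfold En
  rw [Finset.mul_sum, Finset.mul_sum, ← Finset.sum_add_distrib]
  refine Finset.sum_congr rfl fun A hA => ?_
  by_cases hiA : i ∈ A
  · have hiAc : i ∉ Aᶜ := by simp [hiA]
    have h1 : ∀ z : ℝ, ∏ k ∈ A, Function.update p i z k = z * ∏ k ∈ A \ {i}, p k :=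
      fun z => Finset.prod_update_of_mem hiA p z
    have h2 : ∀ z : ℝ, ∏ k ∈ Aᶜ, (1 - Function.update p i z k) = ∏ k ∈ Aᶜ, (1 - p k) := by
      intro z; refine Finset.prod_congr rfl fun k hk => ?_
      rw [Function.update_of_ne (by rintro rfl; exact hiAc hk)]
    rw [h1 x, h1 0, h1 1, h2 x, h2 0, h2 1]; ring
  · have hiAc : i ∈ Aᶜ := Finset.mem_compl.mpr hiA
    have h1 : ∀ z : ℝ, ∏ k ∈ A, Function.update p i z k = ∏ k ∈ A, p k := by
      intro z; refine Finset.prod_congr rfl fun k hk => ?_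
      rw [Function.update_of_ne (by rintro rfl; exact hiA hk)]
    have h2 : ∀ z : ℝ, ∏ k ∈ Aᶜ, (1 - Function.update p i z k)
        = (1 - z) * ∏ k ∈ Aᶜ \ {i}, (1 - p k) := by
      intro z
      rw [Finset.prod_eq_mul_prod_sdiff_singleton_of_mem hiAc]
      rw [Function.update_self]
      congr 1
      refine Finset.prod_congr rfl fun k hk => ?_
      rw [Function.update_of_ne (by rintro rfl; simp at hk)]
    rw [h1 x, h1 0, h1 1, h2 x, h2 0, h2 1]; ring

lemma En_perm {n : ℕ} (p : Fin n → ℝ) (σ : Equiv.Perm (Fin n)) :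
    En (p ∘ σ) = En p := by
  unfold En
  rw [Finset.powerset_univ]
  refine Fintype.sum_equiv σ.finsetCongr _ _ fun A => ?_
  have hcompl : (σ.finsetCongr A)ᶜ = σ.finsetCongr Aᶜ := by
    ext b
    simp [Equiv.finsetCongr_apply, Finset.mem_map_equiv]
  rw [hcompl]
  simp only [Equiv.finsetCongr_apply, Finset.card_map, Finset.prod_map]
  rfl

lemma key_pair {n : ℕ} (p : Fin n → ℝ) (hpC : ∀ k, p k ∈ Set.Icc (0:ℝ) (1/2))
    (hmax : ∀ q : Fin n → ℝ, (∀ k, q k ∈ Set.Icc (0:ℝ) (1/2)) → Rn q ≤ Rn p)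
    (hg : ∀ q : Fin n → ℝ, (∀ k, q k ∈ Set.Icc (0:ℝ) (1/2)) → Rn q = Rn p →
      (∑ k, (q k)^2) ≤ ∑ k, (p k)^2)
    (i j : Fin n) (hij : i ≠ j)
    (hi : p i ∈ Set.Ioo (0:ℝ) (1/2)) (hj : p j ∈ Set.Ioo (0:ℝ) (1/2)) :
    p i = p j := by
  obtain ⟨hi1, hi2⟩ := hi
  obtain ⟨hj1, hj2⟩ := hj
  set x0 := p i with hx0
  set y0 := p j with hy0
  set t := x0 + y0 with ht
  set q : ℝ → Fin n → ℝ :=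
    fun x => Function.update (Function.update p i x) j (t - x) with hqdef
  have hqj : ∀ x, q x j = t - x := fun x => Function.update_self _ _ _
  have hqi : ∀ x, q x i = x := by
    intro x
    rw [hqdef]
    simp only
    rw [Function.update_of_ne hij, Function.update_self]
  have hqk : ∀ x k, k ≠ i → k ≠ j → q x k = p k := by
    intro x k hki hkj
    rw [hqdef]
    simp only
    rw [Function.update_of_ne hkj, Function.update_of_ne hki]
  have hq_self : q x0 = p := by
    funext k
    rcases eq_or_ne k j with rfl | hkj
    · rw [hqj, ht, hy0]; ring
    · rcases eq_or_ne k i with rfl | hki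
      · rw [hqi]
      · rw [hqk _ _ hki hkj]
  have sum_f : ∀ (x : ℝ) (f : ℝ → ℝ), ∑ k, f (q x k)
      = f x + f (t - x) + ∑ k ∈ (Finset.univ \ {j}) \ {i}, f (p k) := by
    intro x f
    rw [Finset.sum_eq_add_sum_sdiff_singleton_of_mem (Finset.mem_univ j) (fun k => f (q x k))]
    have hiu : i ∈ Finset.univ \ {j} := by simp [hij]
    rw [Finset.sum_eq_add_sum_sdiff_singleton_of_mem hiu (fun k => f (q x k))]
    rw [hqj, hqi]
    have : ∑ k ∈ (Finset.univ \ {j}) \ {i}, f (q x k)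
        = ∑ k ∈ (Finset.univ \ {j}) \ {i}, f (p k) := by
      refine Finset.sum_congr rfl fun k hk => ?_
      simp only [Finset.mem_sdiff, Finset.mem_singleton] at hk
      rw [hqk _ _ hk.2 hk.1.2]
    rw [this]; ring
  have hsum : ∀ x, ∑ k, q x k = ∑ k, p k := by
    intro x
    have h1 := sum_f x (fun z => z)
    have h2 := sum_f x0 (fun z => z)
    rw [hq_self] at h2
    rw [h1, h2]; ring
  set Φ : ℝ → ℝ → ℝ :=
    fun x y => En (Function.update (Function.update p i x) j y) with hΦ
  have hbil : ∀ x y : ℝ, Φ x y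
      = (1-x)*((1-y)*Φ 0 0 + y*Φ 0 1) + x*((1-y)*Φ 1 0 + y*Φ 1 1) := by
    intro x y
    have h2 : ∀ a : ℝ, Φ a y = (1-y) * Φ a 0 + y * Φ a 1 := by
      intro a
      rw [hΦ]
      simp only
      rw [En_update (Function.update p i a) j y]
    have h1 : Φ x y = (1-x) * Φ 0 y + x * Φ 1 y := by
      have e : ∀ w : ℝ, Φ w y = En (Function.update (Function.update p j y) i w) := by
        intro w; rw [hΦ]; simp only; rw [Function.update_comm hij]
      rw [e x, e 0, e 1, En_update (Function.update p j y) i x]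
    rw [h1, h2 0, h2 1]
  have hsym : Φ 0 1 = Φ 1 0 := by
    have hcomp : (Function.update (Function.update p i (1:ℝ)) j 0) ∘ (Equiv.swap i j) =
        Function.update (Function.update p i (0:ℝ)) j 1 := by
      funext k
      simp only [Function.comp_apply]
      rcases eq_or_ne k i with rfl | hki
      · rw [Equiv.swap_apply_left, Function.update_self, Function.update_of_ne hij,
          Function.update_self]
      · rcases eq_or_ne k j with rfl | hkj
        · rw [Equiv.swap_apply_right, Function.update_of_ne hij, Function.update_self,
            Function.update_self]
        · rw [Equiv.swap_apply_of_ne_of_ne hki hkj, Function.update_of_ne hkj,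
            Function.update_of_ne hki, Function.update_of_ne hkj, Function.update_of_ne hki]
    calc Φ 0 1 = En ((Function.update (Function.update p i (1:ℝ)) j 0) ∘ (Equiv.swap i j)) := by
          rw [hcomp]
      _ = En (Function.update (Function.update p i (1:ℝ)) j 0) := En_perm _ _
      _ = Φ 1 0 := rfl
  set s := ∑ k, p k with hs
  have hs0 : 0 < s := Finset.sum_pos' (fun k _ => (hpC k).1) ⟨i, Finset.mem_univ i, hi1⟩
  set K := Real.sqrt s * (Φ 1 1 - 2 * Φ 1 0 + Φ 0 0) with hK
  have hG : ∀ x : ℝ, Rn (q x)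
      = Real.sqrt s * (Φ 0 0 + (Φ 1 0 - Φ 0 0) * t) + K * (x * (t - x)) := by
    intro x
    have h0 : Rn (q x) = Real.sqrt s * Φ x (t - x) := by
      unfold Rn
      rw [hsum x]
    rw [h0, hbil x (t - x), hsym, hK]
    ring
  have hRnp : Rn p
      = Real.sqrt s * (Φ 0 0 + (Φ 1 0 - Φ 0 0) * t) + K * (x0 * (t - x0)) := by
    rw [← hq_self]; exact hG x0
  set L := max 0 (t - 1/2) with hL
  have hL0 : (0:ℝ) ≤ L := le_max_left _ _
  have htL : t - L ≤ 1/2 := by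
    have := le_max_right 0 (t - 1/2); rw [← hL] at this; linarith
  have hLx0 : L < x0 := max_lt hi1 (by linarith)
  have hLy0 : L < y0 := max_lt hj1 (by linarith)
  have hfeas : ∀ x : ℝ, L ≤ x → x ≤ t - L → ∀ k, q x k ∈ Set.Icc (0:ℝ) (1/2) := by
    intro x hx1 hx2 k
    rcases eq_or_ne k j with rfl | hkj
    · rw [hqj]; constructor <;> linarith
    · rcases eq_or_ne k i with rfl | hki
      · rw [hqi]; constructor <;> linarith
      · rw [hqk _ _ hki hkj]; exact hpC k
  clear_value q Φ s K L
  rcases lt_trichotomy K 0 with hKlt | hKeq | hKgt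
  · exfalso
    have hfe := hfeas L le_rfl (by linarith)
    have h1 : L * (t - L) < x0 * (t - x0) := by nlinarith [mul_pos (sub_pos.2 hLx0) (sub_pos.2 hLy0)]
    have hlt : Rn p < Rn (q L) := by
      rw [hRnp, hG L]
      have h2 := mul_lt_mul_of_neg_left h1 hKlt
      linarith
    exact absurd (hmax (q L) hfe) (not_le.2 hlt)
  · exfalso
    have hfe := hfeas L le_rfl (by linarith)
    have hRneq : Rn (q L) = Rn p := by rw [hRnp, hG L, hKeq]; ring
    have hgle := hg (q L) hfe hRneq
    have hsq1 := sum_f L (fun z => z^2)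
    have hsq2 := sum_f x0 (fun z => z^2)
    rw [hq_self] at hsq2
    rw [hsq1, hsq2] at hgle
    nlinarith [mul_pos (sub_pos.2 hLx0) (sub_pos.2 hLy0)]
  · by_contra hne
    have hfe := hfeas (t/2) (by linarith) (by linarith)
    have hxt : x0 - t/2 ≠ 0 := by
      intro h
      apply hne
      rw [hx0, hy0]
      have : x0 = t / 2 := by linarith
      rw [ht] at this
      linarith
    have hsq : 0 < (x0 - t/2)^2 :=
      lt_of_le_of_ne (sq_nonneg _) (Ne.symm (pow_ne_zero 2 hxt))
    have h1 : x0 * (t - x0) < (t/2) * (t - t/2) := by nlinarith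
    have hlt : Rn p < Rn (q (t/2)) := by
      rw [hRnp, hG (t/2)]
      have h2 := mul_lt_mul_of_pos_left h1 hKgt
      linarith
    exact absurd (hmax _ hfe) (not_le.2 hlt)

lemma En_continuous {n : ℕ} : Continuous (En (n := n)) := by
  unfold En
  apply continuous_finset_sum
  intro A _
  exact continuous_const.mul ((continuous_finset_prod _ fun i _ => continuous_apply i).mul
    (continuous_finset_prod _ fun i _ => continuous_const.sub (continuous_apply i)))

lemma Rn_continuous {n : ℕ} : Continuous (Rn (n := n)) :=
  (Real.continuous_sqrt.comp (continuous_finset_sum _ fun i _ => continuous_apply i)).mul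
    En_continuous

theorem Rn_max_at_three_valued_point (n : ℕ) (hn : 1 ≤ n) :
    ∃ p : Fin n → ℝ, (∀ i, p i ∈ Set.Icc (0:ℝ) (1/2)) ∧
      (∀ q : Fin n → ℝ, (∀ i, q i ∈ Set.Icc (0:ℝ) (1/2)) → Rn q ≤ Rn p) ∧
      ∃ u : ℝ, u ∈ Set.Ioo (0:ℝ) (1/2) ∧ ∀ i, p i ∈ ({0, u, 1/2} : Set ℝ) := by
  classical
  set C : Set (Fin n → ℝ) := {p | ∀ i, p i ∈ Set.Icc (0:ℝ) (1/2)} with hC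
  have hCeq : C = Set.pi Set.univ (fun _ : Fin n => Set.Icc (0:ℝ) (1/2)) := by
    ext p; rw [Set.mem_univ_pi]; exact Iff.rfl
  have hCcpt : IsCompact C := by
    rw [hCeq]; exact isCompact_univ_pi fun _ => isCompact_Icc
  have hCne : C.Nonempty := ⟨fun _ => 0, fun i => ⟨le_refl 0, by norm_num⟩⟩
  obtain ⟨p0, hp0C, hp0max⟩ := hCcpt.exists_isMaxOn hCne Rn_continuous.continuousOn
  set M : Set (Fin n → ℝ) := C ∩ Rn ⁻¹' {Rn p0} with hM
  have hMcpt : IsCompact M :=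
    hCcpt.inter_right (isClosed_singleton.preimage Rn_continuous)
  have hMne : M.Nonempty := ⟨p0, hp0C, rfl⟩
  have hgc : Continuous fun p : Fin n → ℝ => ∑ k, (p k)^2 :=
    continuous_finset_sum _ fun k _ => (continuous_apply k).pow 2
  obtain ⟨p, hpM, hpg⟩ := hMcpt.exists_isMaxOn hMne hgc.continuousOn
  obtain ⟨hpC, hpR⟩ := hpM
  have hpR' : Rn p = Rn p0 := hpR
  have hmax : ∀ q : Fin n → ℝ, (∀ k, q k ∈ Set.Icc (0:ℝ) (1/2)) → Rn q ≤ Rn p :=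
    fun q hq => hpR' ▸ hp0max hq
  have hg : ∀ q : Fin n → ℝ, (∀ k, q k ∈ Set.Icc (0:ℝ) (1/2)) → Rn q = Rn p →
      (∑ k, (q k)^2) ≤ ∑ k, (p k)^2 := by
    intro q hq he
    exact hpg (Set.mem_inter hq (by rw [Set.mem_preimage, Set.mem_singleton_iff, he, hpR']))
  have hpC' : ∀ i, p i ∈ Set.Icc (0:ℝ) (1/2) := hpC
  by_cases hex : ∃ i0, p i0 ∈ Set.Ioo (0:ℝ) (1/2)
  · obtain ⟨i0, hio⟩ := hex
    refine ⟨p, hpC', hmax, p i0, hio, fun k => ?_⟩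
    simp only [Set.mem_insert_iff, Set.mem_singleton_iff]
    rcases eq_or_ne k i0 with rfl | hk
    · exact Or.inr (Or.inl rfl)
    · rcases eq_or_lt_of_le (hpC' k).1 with h0 | h0
      · exact Or.inl h0.symm
      · rcases eq_or_lt_of_le (hpC' k).2 with h1 | h1
        · exact Or.inr (Or.inr h1)
        · exact Or.inr (Or.inl (key_pair p hpC' hmax hg k i0 hk ⟨h0, h1⟩ hio))
  · push_neg at hex
    refine ⟨p, hpC', hmax, 1/4, by norm_num, fun k => ?_⟩
    simp only [Set.mem_insert_iff, Set.mem_singleton_iff]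
    rcases eq_or_lt_of_le (hpC' k).1 with h0 | h0
    · exact Or.inl h0.symm
    · rcases eq_or_lt_of_le (hpC' k).2 with h1 | h1
      · exact Or.inr (Or.inr h1)
      · exact absurd ⟨h0, h1⟩ (hex k)
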